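/- For d ≥ 2 and x ≥ d, the quantity f_{d,x} = c_{d,x} + (√(d²−1)/(2x)) arcsin(√(d²−1)/(2x)), where c_{d,x} = √(1 − (d²−1)/(4x²)), satisfies 0.85 ≤ 1 − 0.15d/x ≤ f_{d,x} ≤ 1 + 0.3d/x ≤ 1.3, and moreover the function x ↦ x·f_{d,x} has derivative √(1 − (d²−1)/(4x²)) ∈ [√(3)/2, 1] for x ≥ d. -/

import Mathlib

open Real

set_option maxHeartbeats 1000000

/-- `c_{d,x} = √(1 - (d²-1)/(4x²))`. -/
noncomputable def besselC (d x : ℝ) : ℝ := Real.sqrt (1 - (d ^ 2 - 1) / (4 * x ^ 2))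

/-- `f_{d,x} = c_{d,x} + (√(d²-1)/(2x)) arcsin(√(d²-1)/(2x))`. -/
noncomputable def besselF (d x : ℝ) : ℝ :=
  besselC d x + (Real.sqrt (d ^ 2 - 1) / (2 * x)) * Real.arcsin (Real.sqrt (d ^ 2 - 1) / (2 * x))

/-- For `d ≥ 2` and `x ≥ d`: `0.85 ≤ 1 - 0.15d/x ≤ f_{d,x} ≤ 1 + 0.3d/x ≤ 1.3`, and
`x ↦ x·f_{d,x}` has derivative `√(1 - (d²-1)/(4x²)) ∈ [√3/2, 1]`. -/
theorem besselF_bounds_and_deriv (d x : ℝ) (hd : 2 ≤ d) (hx : d ≤ x) :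
    (0.85 ≤ 1 - 0.15 * d / x ∧ 1 - 0.15 * d / x ≤ besselF d x ∧
      besselF d x ≤ 1 + 0.3 * d / x ∧ 1 + 0.3 * d / x ≤ 1.3) ∧
    HasDerivAt (fun t => t * besselF d t) (Real.sqrt (1 - (d ^ 2 - 1) / (4 * x ^ 2))) x ∧
    Real.sqrt 3 / 2 ≤ Real.sqrt (1 - (d ^ 2 - 1) / (4 * x ^ 2)) ∧
    Real.sqrt (1 - (d ^ 2 - 1) / (4 * x ^ 2)) ≤ 1 := by
  have hx0 : (0:ℝ) < x := lt_of_lt_of_le (by norm_num) (le_trans hd hx)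
  have hd1 : (0:ℝ) ≤ d ^ 2 - 1 := by nlinarith
  set s := Real.sqrt (d ^ 2 - 1) with hs_def
  have hs2 : s ^ 2 = d ^ 2 - 1 := Real.sq_sqrt hd1
  have hs0 : 0 ≤ s := Real.sqrt_nonneg _
  have hsx : s ≤ x := by nlinarith
  have hspos : 0 < s := by nlinarith
  set u := s / (2 * x) with hu_def
  have hu0 : 0 < u := by positivity
  have huh : u ≤ 1 / 2 := by
    rw [hu_def, div_le_iff₀ (by linarith)]; linarith
  have hu2 : u ^ 2 = (d ^ 2 - 1) / (4 * x ^ 2) := by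
    rw [hu_def, div_pow, hs2]; congr 1; ring
  have hc0 : (0:ℝ) ≤ 1 - u ^ 2 := by nlinarith
  -- the sqrt bounds
  have hcgoal : Real.sqrt 3 / 2 ≤ Real.sqrt (1 - (d ^ 2 - 1) / (4 * x ^ 2)) := by
    rw [← hu2]
    have h32 : Real.sqrt 3 / 2 = Real.sqrt (3 / 4) := by
      rw [Real.sqrt_div' 3 (by norm_num : (0:ℝ) ≤ 4),
        show Real.sqrt 4 = 2 by
          rw [show (4:ℝ) = 2 ^ 2 by norm_num, Real.sqrt_sq (by norm_num : (0:ℝ) ≤ 2)]]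
    rw [h32]
    exact Real.sqrt_le_sqrt (by nlinarith)
  have hcle1 : Real.sqrt (1 - (d ^ 2 - 1) / (4 * x ^ 2)) ≤ 1 := by
    rw [Real.sqrt_le_one]
    rw [← hu2]; nlinarith
  -- expression for besselF
  set c := Real.sqrt (1 - u ^ 2) with hc_def
  have hc2 : c ^ 2 = 1 - u ^ 2 := Real.sq_sqrt hc0
  have hcpos : 0 < c := Real.sqrt_pos.mpr (by nlinarith)
  have hF : besselF d x = c + u * Real.arcsin u := by
    unfold besselF besselC
    rw [← hu2, hc_def, hu_def]
  have hc86 : (0.86 : ℝ) ≤ c := by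
    have h1 : (1.72 : ℝ) ≤ Real.sqrt 3 := by
      nlinarith [Real.sq_sqrt (show (0:ℝ) ≤ 3 by norm_num), Real.sqrt_nonneg 3]
    have h2 := hcgoal
    rw [← hu2] at h2
    linarith
  have hcle1' : c ≤ 1 := by rw [hc_def, Real.sqrt_le_one]; nlinarith
  -- arcsin bounds
  have hu1 : u < 1 := by linarith
  have harc_pos : 0 < Real.arcsin u := Real.arcsin_pos.mpr hu0
  have harc_lb : u ≤ Real.arcsin u := by
    have := Real.sin_le harc_pos.le
    rwa [Real.sin_arcsin (by linarith) (by linarith)] at this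
  have harc_ub : Real.arcsin u ≤ u / c := by
    have h1 : Real.arcsin u < π / 2 := Real.arcsin_lt_pi_div_two.mpr hu1
    have h2 := Real.lt_tan harc_pos h1
    rw [Real.tan_arcsin] at h2
    rw [← hc_def] at h2
    linarith
  -- the bounds on besselF
  have hbounds : 0.85 ≤ 1 - 0.15 * d / x ∧ 1 - 0.15 * d / x ≤ besselF d x ∧
      besselF d x ≤ 1 + 0.3 * d / x ∧ 1 + 0.3 * d / x ≤ 1.3 := by
    have hdx : 0.15 * d / x ≤ 0.15 := by
      rw [div_le_iff₀ hx0]; nlinarith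
    have hdx' : 0.3 * d / x ≤ 0.3 := by
      rw [div_le_iff₀ hx0]; nlinarith
    have hdx0 : 0 ≤ 0.15 * d / x := by positivity
    refine ⟨by linarith, ?_, ?_, by linarith⟩
    · -- lower bound: besselF ≥ 1
      have hcl : 1 - u ^ 2 ≤ c := by
        nlinarith [hc2, hcpos, hcle1']
      have : (1:ℝ) ≤ besselF d x := by
        rw [hF]; nlinarith [mul_le_mul_of_nonneg_left harc_lb hu0.le]
      linarith
    · -- upper bound
      rw [hF]
      have h1 : u * Real.arcsin u ≤ u ^ 2 / c := by
        have := mul_le_mul_of_nonneg_left harc_ub hu0.le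
        calc u * Real.arcsin u ≤ u * (u / c) := this
          _ = u ^ 2 / c := by ring
      have h2 : u ^ 2 / c ≤ u ^ 2 / 0.86 := by
        apply div_le_div_of_nonneg_left (by positivity) (by norm_num) hc86
      have hdpos : (0:ℝ) < d := lt_of_lt_of_le two_pos hd
      have hu2b : u ^ 2 ≤ 0.25 * d / x := by
        rw [hu2, div_le_div_iff₀ (by positivity) hx0]
        nlinarith [mul_le_mul_of_nonneg_right hx (mul_pos hdpos hx0).le, hx0]
      have hdx_nn : (0:ℝ) ≤ d / x := by positivity
      have h3 : u ^ 2 / 0.86 ≤ 0.3 * d / x := by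
        calc u ^ 2 / 0.86 ≤ (0.25 * d / x) / 0.86 := by gcongr
          _ = (0.25 / 0.86) * (d / x) := by ring
          _ ≤ 0.3 * (d / x) := mul_le_mul_of_nonneg_right (by norm_num) hdx_nn
          _ = 0.3 * d / x := by ring
      linarith
  refine ⟨hbounds, ?_, hcgoal, hcle1⟩
  -- derivative
  set a : ℝ := (d ^ 2 - 1) / 4 with ha_def
  have hxa : 0 < x ^ 2 - a := by rw [ha_def]; nlinarith
  set q := Real.sqrt (x ^ 2 - a) with hq_def
  have hq2 : q ^ 2 = x ^ 2 - a := Real.sq_sqrt hxa.le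
  have hqpos : 0 < q := Real.sqrt_pos.mpr hxa
  have hcq : c * x = q := by
    have h1 : (c * x) ^ 2 = q ^ 2 := by
      rw [hq2]
      rw [mul_pow, hc2, hu2, ha_def]
      field_simp
    nlinarith [h1, hqpos, mul_pos hcpos hx0]
  -- derivative of the nice form
  have h1 : HasDerivAt (fun t : ℝ => t ^ 2 - a) (2 * x) x := by
    simpa using (hasDerivAt_pow 2 x).sub_const a
  have h2 : HasDerivAt (fun t : ℝ => Real.sqrt (t ^ 2 - a))
      (1 / (2 * Real.sqrt (x ^ 2 - a)) * (2 * x)) x :=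
    (Real.hasDerivAt_sqrt hxa.ne').comp x h1
  have h3 : HasDerivAt (fun t : ℝ => s / 2 * t⁻¹) (s / 2 * -(x ^ 2)⁻¹) x :=
    (hasDerivAt_inv hx0.ne').const_mul (s / 2)
  have hux : s / 2 * x⁻¹ = u := by rw [hu_def]; ring
  have h4 : HasDerivAt (fun t : ℝ => Real.arcsin (s / 2 * t⁻¹))
      (1 / Real.sqrt (1 - (s / 2 * x⁻¹) ^ 2) * (s / 2 * -(x ^ 2)⁻¹)) x := by
    have harc := Real.hasDerivAt_arcsin (x := s / 2 * x⁻¹)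
      (by rw [hux]; linarith) (by rw [hux]; linarith)
    exact harc.comp x h3
  have h5 : HasDerivAt (fun t : ℝ => Real.sqrt (t ^ 2 - a) +
      s / 2 * Real.arcsin (s / 2 * t⁻¹))
      (1 / (2 * Real.sqrt (x ^ 2 - a)) * (2 * x) +
        s / 2 * (1 / Real.sqrt (1 - (s / 2 * x⁻¹) ^ 2) * (s / 2 * -(x ^ 2)⁻¹))) x :=
    h2.add (h4.const_mul (s / 2))
  -- identify functions near x
  have heq : (fun t : ℝ => t * besselF d t) =ᶠ[nhds x]
      (fun t : ℝ => Real.sqrt (t ^ 2 - a) + s / 2 * Real.arcsin (s / 2 * t⁻¹)) := by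
    filter_upwards [Ioi_mem_nhds (half_lt_self hx0)] with t ht
    have ht0 : 0 < t := lt_trans (by positivity) ht
    have hta : 0 < t ^ 2 - a := by
      rw [ha_def]
      have h1 : d / 2 < t := lt_of_le_of_lt (by linarith) ht
      have h2 : (d / 2) ^ 2 < t ^ 2 := by
        apply pow_lt_pow_left₀ h1 (by linarith) (by norm_num)
      have h3 : (d / 2) ^ 2 = d ^ 2 / 4 := by ring
      linarith
    have hsq : Real.sqrt (t ^ 2 - a) = t * Real.sqrt (1 - (d ^ 2 - 1) / (4 * t ^ 2)) := by
      rw [show t ^ 2 - a = t ^ 2 * (1 - (d ^ 2 - 1) / (4 * t ^ 2)) by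
        rw [ha_def]; field_simp]
      rw [Real.sqrt_mul (sq_nonneg t), Real.sqrt_sq ht0.le]
    unfold besselF besselC
    rw [hsq, ← hs_def]
    have harg : s / (2 * t) = s / 2 * t⁻¹ := by ring
    rw [harg]
    field_simp
  have hD : HasDerivAt (fun t : ℝ => t * besselF d t)
      (1 / (2 * Real.sqrt (x ^ 2 - a)) * (2 * x) +
        s / 2 * (1 / Real.sqrt (1 - (s / 2 * x⁻¹) ^ 2) * (s / 2 * -(x ^ 2)⁻¹))) x :=
    h5.congr_of_eventuallyEq heq
  convert hD using 1
  -- show the derivative value is √(1 - (d²-1)/(4x²)) = c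
  rw [← hu2, ← hc_def, ← hq_def, hux, ← hc_def]
  rw [← hcq]
  field_simp
  have hxinv : x * x⁻¹ = 1 := mul_inv_cancel₀ hx0.ne'
  have hu2x : u * (2 * x) = s := by rw [hu_def]; exact div_mul_cancel₀ _ (by positivity)
  have hk : c ^ 2 * (4 * x ^ 2) = 4 * x ^ 2 - s ^ 2 := by
    linear_combination (4 * x ^ 2) * hc2 - (u * (2 * x) + s) * hu2x
  linear_combination hk
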